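/- Let P₁ and P₂ be two posets as above and let P = P₁ ⊔ P₂ be their disjoint union (no order relations between the components), so that finite order ideals of P are pairs (λ¹, λ²) of finite order ideals of P₁ and P₂, identifying J(P) ≅ J(P₁) × J(P₂) with |(λ¹,λ²)| = |λ¹| + |λ²|; let κ be the multiplicity function on J(P) induced by multiplicity functions κ₁ on J(P₁) and κ₂ on J(P₂) (an edge of J(P) changes exactly one component and receives the corresponding multiplicity κᵢ). Then a function 𝗊² = (𝗊₁², 𝗊₂²) on P = P₁ ⊔ P₂ satisfies the Kerov condition on J(P) with parameter t if and only if for each i = 1, 2 the function 𝗊ᵢ² satisfies the Kerov condition on J(Pᵢ) with some parameter tᵢ; in that case t = t₁ + t₂. -/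

import Mathlib

open scoped BigOperators Classical

namespace IdealGraph

variable {P : Type*} [PartialOrder P]

/-- A finite order ideal of the poset `P`, encoded as a down-closed `Finset`. -/
def IsIdealF (s : Finset P) : Prop := ∀ ⦃x⦄, x ∈ s → ∀ ⦃y⦄, y ≤ x → y ∈ s

/-- The vertex set of the branching graph of ideals `𝔾 = J(P)`. -/
abbrev G (P : Type*) [PartialOrder P] := {s : Finset P // IsIdealF s}

/-- The `n`-th level `𝔾_n` of the branching graph. -/
abbrev Lvl (P : Type*) [PartialOrder P] (n : ℕ) := {s : Finset P // IsIdealF s ∧ s.card = n}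

/-- `CoversF μ l` : `μ ↗ l` is an edge of the branching graph of ideals. -/
def CoversF (μ l : Finset P) : Prop :=
  IsIdealF μ ∧ IsIdealF l ∧ μ ⊆ l ∧ l.card = μ.card + 1

/-- All levels `𝔾_n` of the graph are finite. -/
def LevelsFinite (P : Type*) [PartialOrder P] : Prop :=
  ∀ n : ℕ, {s : Finset P | IsIdealF s ∧ s.card = n}.Finite

/-- An edge multiplicity function is (strictly) positive on all edges. -/
def EdgePositive (κ : Finset P → Finset P → ℝ) : Prop :=
  ∀ μ l, CoversF μ l → 0 < κ μ l

/-- UD-self-duality of a multiplicity function: for every quadrangle `μ ρ ν λ`. -/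
def UDSelfDual (κ : Finset P → Finset P → ℝ) : Prop :=
  ∀ μ ρ l ν : Finset P, CoversF μ ρ → CoversF ρ ν → CoversF μ l → CoversF l ν →
    ρ ≠ l → κ μ l * κ μ ρ = κ l ν * κ ρ ν

/-- The value of a function `q : P → R` on the box `l ∖ μ` of an edge `μ ↗ l`. -/
noncomputable def bx {R : Type*} [AddCommMonoid R] (q : P → R) (μ l : Finset P) : R :=
  ∑ x ∈ l \ μ, q x

/-- The Kerov condition with parameter `t` for the function `q2 = 𝗊²`. -/
def KerovCond (κ : Finset P → Finset P → ℝ) (q2 : P → ℂ) (t : ℂ) : Prop :=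
  ∀ l : Finset P, IsIdealF l →
    (∑' ν : {ν : Finset P // CoversF l ν}, (κ l ν.1 : ℂ) ^ 2 * bx q2 l ν.1) -
      (∑' μ : {μ : Finset P // CoversF μ l}, (κ μ.1 l : ℂ) ^ 2 * bx q2 μ.1 l)
      = 2 * (l.card : ℂ) + t

/-- Weighted number of saturated chains of length `n` from the ideal `μ` up to the ideal `l`. -/
noncomputable def dimRel (κ : Finset P → Finset P → ℝ) : ℕ → Finset P → Finset P → ℝ
  | 0, μ, l => if μ = l then 1 else 0
  | n + 1, μ, l =>
      ∑ x ∈ l, if CoversF (l.erase x) l ∧ μ ⊆ l.erase x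
        then κ (l.erase x) l * dimRel κ n μ (l.erase x) else 0

/-- Relative dimension `dim(μ, l)`. -/
noncomputable def dimI (κ : Finset P → Finset P → ℝ) (μ l : Finset P) : ℝ :=
  dimRel κ (l.card - μ.card) μ l

/-- Dimension `dim l = dim(∅, l)`. -/
noncomputable def dimT (κ : Finset P → Finset P → ℝ) (l : Finset P) : ℝ :=
  dimI κ ∅ l

/-- The relative dimension function `P*_μ`. -/
noncomputable def Pstar (κ : Finset P → Finset P → ℝ) (μ l : Finset P) : ℝ :=
  (l.card.descFactorial μ.card : ℝ) * dimI κ μ l / dimT κ l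

/-- The mixed measure `M_ξ`. -/
noncomputable def Mxi (κ : Finset P → Finset P → ℝ) (q : P → ℝ) (t ξ : ℝ) (l : Finset P) : ℝ :=
  (1 - ξ) ^ t * ξ ^ l.card * (dimT κ l / (Nat.factorial l.card : ℝ)) ^ 2 * ∏ x ∈ l, q x ^ 2

/-- The coherent measure `M_n(l)` (for `n = |l|`). -/
noncomputable def Mcoh (κ : Finset P → Finset P → ℝ) (q : P → ℝ) (t : ℝ) (l : Finset P) : ℝ :=
  dimT κ l ^ 2 * (∏ x ∈ l, q x ^ 2) /
    ((Nat.factorial l.card : ℝ) * Polynomial.eval t (ascPochhammer ℝ l.card))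

/-- The jump rates `Q(l, ρ)` of the Markov jump dynamics. -/
noncomputable def Qrate (κ : Finset P → Finset P → ℝ) (q : P → ℝ) (t ξ : ℝ)
    (l ρ : Finset P) : ℝ :=
  if CoversF ρ l then (1 - ξ)⁻¹ * l.card * (κ ρ l * dimT κ ρ / dimT κ l)
  else if CoversF l ρ then
    (1 - ξ)⁻¹ * (ξ * ((l.card : ℝ) + t)) *
      ((Mcoh κ q t ρ / Mcoh κ q t l) * (κ l ρ * dimT κ l / dimT κ ρ))
  else if ρ = l then -((1 - ξ)⁻¹ * ((l.card : ℝ) + ξ * ((l.card : ℝ) + t)))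
  else 0

/-- The function `𝔐_l`. -/
noncomputable def Mfrak (κ : Finset P → Finset P → ℝ) (q : P → ℝ) (ξ : ℝ)
    (l ν : Finset P) : ℝ :=
  ∑ μ ∈ l.powerset.filter (fun s => IsIdealF s),
    (ξ / (ξ - 1)) ^ (l.card - μ.card) *
      (dimI κ μ l / (Nat.factorial (l.card - μ.card) : ℝ)) *
      (∏ x ∈ l \ μ, q x ^ 2) * Pstar κ μ ν

/-- The operator `U` built from `κ` and `q`. -/
noncomputable def Uop (κ : Finset P → Finset P → ℝ) (q : P → ℂ) (f : Finset P → ℂ) :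
    Finset P → ℂ :=
  fun l => ∑' μ : {μ : Finset P // CoversF μ l}, (κ μ.1 l : ℂ) * bx q μ.1 l * f μ.1

/-- The operator `D` built from `κ` and `q`. -/
noncomputable def Dop (κ : Finset P → Finset P → ℝ) (q : P → ℂ) (f : Finset P → ℂ) :
    Finset P → ℂ :=
  fun l => ∑' ν : {ν : Finset P // CoversF l ν}, (κ l ν.1 : ℂ) * bx q l ν.1 * f ν.1

/-- The standard basis vector `δ_l`. -/
noncomputable def delta (l : Finset P) : Finset P → ℂ := fun ρ => if ρ = l then 1 else 0


/-- The multiplicity function on `J(P₁ ⊔ P₂)` induced by multiplicity functions `κ₁, κ₂`: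
an edge changing only the right component gets the `κ₂`-multiplicity of its right projection,
and an edge changing the left component gets the `κ₁`-multiplicity of its left projection. -/
noncomputable def sumKappa {P₁ P₂ : Type*}
    (κ₁ : Finset P₁ → Finset P₁ → ℝ) (κ₂ : Finset P₂ → Finset P₂ → ℝ)
    (μ l : Finset (P₁ ⊕ P₂)) : ℝ :=
  if μ.toLeft = l.toLeft then κ₂ μ.toRight l.toRight else κ₁ μ.toLeft l.toLeft

section SumPoset

variable {P₁ P₂ : Type*} [PartialOrder P₁] [PartialOrder P₂]

lemma isIdealF_sum_iff {s : Finset (P₁ ⊕ P₂)} :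
    IsIdealF s ↔ IsIdealF s.toLeft ∧ IsIdealF s.toRight := by
  constructor
  · intro h
    refine ⟨fun x hx y hy => ?_, fun x hx y hy => ?_⟩
    · simp only [Finset.mem_toLeft] at *
      exact h hx (Sum.inl_le_inl_iff.mpr hy)
    · simp only [Finset.mem_toRight] at *
      exact h hx (Sum.inr_le_inr_iff.mpr hy)
  · rintro ⟨h₁, h₂⟩ x hx y hy
    match x, y with
    | Sum.inl x, Sum.inl y =>
      simpa using h₁ (Finset.mem_toLeft.mpr hx) (Sum.inl_le_inl_iff.mp hy)
    | Sum.inl x, Sum.inr y => exact absurd hy Sum.not_inr_le_inl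
    | Sum.inr x, Sum.inl y => exact absurd hy Sum.not_inl_le_inr
    | Sum.inr x, Sum.inr y =>
      simpa using h₂ (Finset.mem_toRight.mpr hx) (Sum.inr_le_inr_iff.mp hy)

lemma subset_sum_iff {μ l : Finset (P₁ ⊕ P₂)} :
    μ ⊆ l ↔ μ.toLeft ⊆ l.toLeft ∧ μ.toRight ⊆ l.toRight := by
  constructor
  · intro h
    exact ⟨Finset.toLeft_subset_toLeft h, Finset.toRight_subset_toRight h⟩
  · rintro ⟨h₁, h₂⟩ x hx
    match x with
    | Sum.inl x => exact Finset.mem_toLeft.mp (h₁ (Finset.mem_toLeft.mpr hx))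
    | Sum.inr x => exact Finset.mem_toRight.mp (h₂ (Finset.mem_toRight.mpr hx))

lemma coversF_sum_iff {μ l : Finset (P₁ ⊕ P₂)} :
    CoversF μ l ↔
      (μ.toLeft = l.toLeft ∧ IsIdealF l.toLeft ∧ CoversF μ.toRight l.toRight) ∨
      (μ.toRight = l.toRight ∧ IsIdealF l.toRight ∧ CoversF μ.toLeft l.toLeft) := by
  constructor
  · rintro ⟨hμ, hlam, hsub, hcard⟩
    obtain ⟨hμ₁, hμ₂⟩ := isIdealF_sum_iff.mp hμ
    obtain ⟨hlam₁, hlam₂⟩ := isIdealF_sum_iff.mp hlam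
    obtain ⟨hs₁, hs₂⟩ := subset_sum_iff.mp hsub
    have e₁ := Finset.card_toLeft_add_card_toRight (u := μ)
    have e₂ := Finset.card_toLeft_add_card_toRight (u := l)
    have i₁ := Finset.card_le_card hs₁
    have i₂ := Finset.card_le_card hs₂
    rcases Nat.lt_or_ge μ.toLeft.card l.toLeft.card with hlt | hge
    · right
      have hr : μ.toRight.card = l.toRight.card := by omega
      have heq : μ.toRight = l.toRight :=
        Finset.eq_of_subset_of_card_le hs₂ (le_of_eq hr.symm)
      exact ⟨heq, hlam₂, hμ₁, hlam₁, hs₁, by omega⟩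
    · left
      have hl' : μ.toLeft.card = l.toLeft.card := by omega
      have heq : μ.toLeft = l.toLeft :=
        Finset.eq_of_subset_of_card_le hs₁ (le_of_eq hl'.symm)
      exact ⟨heq, hlam₁, hμ₂, hlam₂, hs₂, by omega⟩
  · have e₁ := Finset.card_toLeft_add_card_toRight (u := μ)
    have e₂ := Finset.card_toLeft_add_card_toRight (u := l)
    rintro (⟨he, hi, h₁, h₂, h₃, h₄⟩ | ⟨he, hi, h₁, h₂, h₃, h₄⟩)
    · refine ⟨isIdealF_sum_iff.mpr ⟨he ▸ hi, h₁⟩, isIdealF_sum_iff.mpr ⟨hi, h₂⟩,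
        subset_sum_iff.mpr ⟨he ▸ subset_rfl, h₃⟩, ?_⟩
      have : μ.toLeft.card = l.toLeft.card := by rw [he]
      omega
    · refine ⟨isIdealF_sum_iff.mpr ⟨h₁, he ▸ hi⟩, isIdealF_sum_iff.mpr ⟨h₂, hi⟩,
        subset_sum_iff.mpr ⟨h₃, he ▸ subset_rfl⟩, ?_⟩
      have : μ.toRight.card = l.toRight.card := by rw [he]
      omega

lemma bx_split (q : P₁ ⊕ P₂ → ℂ) (μ l : Finset (P₁ ⊕ P₂)) :
    bx q μ l = bx (fun x => q (Sum.inl x)) μ.toLeft l.toLeft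
      + bx (fun x => q (Sum.inr x)) μ.toRight l.toRight := by
  unfold bx
  rw [← Finset.sum_disjSum]
  refine Finset.sum_congr ?_ (fun x _ => rfl)
  ext (x | x) <;> simp



noncomputable def upEquiv (l : Finset (P₁ ⊕ P₂)) (hl : IsIdealF l) :
    {ν : Finset (P₁ ⊕ P₂) // CoversF l ν} ≃
      {ν₁ : Finset P₁ // CoversF l.toLeft ν₁} ⊕ {ν₂ : Finset P₂ // CoversF l.toRight ν₂} where
  toFun ν := if h : ν.1.toLeft = l.toLeft then
      Sum.inr ⟨ν.1.toRight, by
        rcases coversF_sum_iff.mp ν.2 with ⟨h1, h2, h3⟩ | ⟨h1, h2, h3⟩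
        · exact h3
        · exact absurd h (by have hc := h3.2.2.2; intro he; rw [he] at hc; omega)⟩
    else
      Sum.inl ⟨ν.1.toLeft, by
        rcases coversF_sum_iff.mp ν.2 with ⟨h1, h2, h3⟩ | ⟨h1, h2, h3⟩
        · exact absurd h1.symm h
        · exact h3⟩
  invFun := Sum.elim
    (fun ν₁ => ⟨ν₁.1.disjSum l.toRight, coversF_sum_iff.mpr (Or.inr
      ⟨by simp, by simpa using (isIdealF_sum_iff.mp hl).2, by simpa using ν₁.2⟩)⟩)
    (fun ν₂ => ⟨l.toLeft.disjSum ν₂.1, coversF_sum_iff.mpr (Or.inl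
      ⟨by simp, by simpa using (isIdealF_sum_iff.mp hl).1, by simpa using ν₂.2⟩)⟩)
  left_inv := by
    rintro ⟨ν, hν⟩
    by_cases h : ν.toLeft = l.toLeft
    · simp only [dif_pos h, Sum.elim_inr]
      refine Subtype.ext ?_
      show l.toLeft.disjSum ν.toRight = ν
      rw [← h, Finset.toLeft_disjSum_toRight]
    · simp only [dif_neg h, Sum.elim_inl]
      refine Subtype.ext ?_
      show ν.toLeft.disjSum l.toRight = ν
      rcases coversF_sum_iff.mp hν with ⟨h1, h2, h3⟩ | ⟨h1, h2, h3⟩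
      · exact absurd h1.symm h
      · rw [h1, Finset.toLeft_disjSum_toRight]
  right_inv := by
    rintro (⟨ν₁, hν₁⟩ | ⟨ν₂, hν₂⟩)
    · have hne : (ν₁.disjSum l.toRight).toLeft ≠ l.toLeft := by
        simp only [Finset.toLeft_disjSum]
        intro he
        have hc := hν₁.2.2.2
        rw [he] at hc; omega
      simp only [Sum.elim_inl, dif_neg hne]
      simp [show ν₁ ≠ l.toLeft by simpa using hne]
    · simp only [Sum.elim_inr, dif_pos (by simp : (l.toLeft.disjSum ν₂).toLeft = l.toLeft)]
      simp

noncomputable def downEquiv (l : Finset (P₁ ⊕ P₂)) (hl : IsIdealF l) :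
    {μ : Finset (P₁ ⊕ P₂) // CoversF μ l} ≃
      {μ₁ : Finset P₁ // CoversF μ₁ l.toLeft} ⊕ {μ₂ : Finset P₂ // CoversF μ₂ l.toRight} where
  toFun μ := if h : μ.1.toLeft = l.toLeft then
      Sum.inr ⟨μ.1.toRight, by
        rcases coversF_sum_iff.mp μ.2 with ⟨h1, h2, h3⟩ | ⟨h1, h2, h3⟩
        · exact h3
        · exact absurd h (by have hc := h3.2.2.2; intro he; rw [he] at hc; omega)⟩
    else
      Sum.inl ⟨μ.1.toLeft, by
        rcases coversF_sum_iff.mp μ.2 with ⟨h1, h2, h3⟩ | ⟨h1, h2, h3⟩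
        · exact absurd h1 h
        · exact h3⟩
  invFun := Sum.elim
    (fun μ₁ => ⟨μ₁.1.disjSum l.toRight, coversF_sum_iff.mpr (Or.inr
      ⟨by simp, by simpa using (isIdealF_sum_iff.mp hl).2, by simpa using μ₁.2⟩)⟩)
    (fun μ₂ => ⟨l.toLeft.disjSum μ₂.1, coversF_sum_iff.mpr (Or.inl
      ⟨by simp, by simpa using (isIdealF_sum_iff.mp hl).1, by simpa using μ₂.2⟩)⟩)
  left_inv := by
    rintro ⟨μ, hμ⟩
    by_cases h : μ.toLeft = l.toLeft
    · simp only [dif_pos h, Sum.elim_inr]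
      refine Subtype.ext ?_
      show l.toLeft.disjSum μ.toRight = μ
      rw [← h, Finset.toLeft_disjSum_toRight]
    · simp only [dif_neg h, Sum.elim_inl]
      refine Subtype.ext ?_
      show μ.toLeft.disjSum l.toRight = μ
      rcases coversF_sum_iff.mp hμ with ⟨h1, h2, h3⟩ | ⟨h1, h2, h3⟩
      · exact absurd h1 h
      · rw [← h1, Finset.toLeft_disjSum_toRight]
  right_inv := by
    rintro (⟨μ₁, hμ₁⟩ | ⟨μ₂, hμ₂⟩)
    · have hne : (μ₁.disjSum l.toRight).toLeft ≠ l.toLeft := by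
        simp only [Finset.toLeft_disjSum]
        intro he
        have hc := hμ₁.2.2.2
        rw [← he] at hc; omega
      simp only [Sum.elim_inl, dif_neg hne]
      simp [show μ₁ ≠ l.toLeft by simpa using hne]
    · simp only [Sum.elim_inr, dif_pos (by simp : (l.toLeft.disjSum μ₂).toLeft = l.toLeft)]
      simp


lemma finite_up {Q : Type*} [PartialOrder Q] (hLF : LevelsFinite Q) (l : Finset Q) :
    Finite {ν : Finset Q // CoversF l ν} :=
  Set.Finite.to_subtype
    ((hLF (l.card + 1)).subset (fun ν hν => ⟨hν.2.1, hν.2.2.2⟩))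

lemma finite_down {Q : Type*} [PartialOrder Q] (l : Finset Q) :
    Finite {μ : Finset Q // CoversF μ l} :=
  Set.Finite.to_subtype
    ((l.powerset.finite_toSet).subset
      (fun μ hμ => Finset.mem_coe.mpr (Finset.mem_powerset.mpr hμ.2.2.1)))

lemma up_split (κ₁ : Finset P₁ → Finset P₁ → ℝ) (κ₂ : Finset P₂ → Finset P₂ → ℝ)
    (hLF₁ : LevelsFinite P₁) (hLF₂ : LevelsFinite P₂) (q2 : P₁ ⊕ P₂ → ℂ)
    (l : Finset (P₁ ⊕ P₂)) (hl : IsIdealF l) :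
    (∑' ν : {ν : Finset (P₁ ⊕ P₂) // CoversF l ν},
        (sumKappa κ₁ κ₂ l ν.1 : ℂ) ^ 2 * bx q2 l ν.1)
      = (∑' ν₁ : {ν₁ : Finset P₁ // CoversF l.toLeft ν₁},
          (κ₁ l.toLeft ν₁.1 : ℂ) ^ 2 * bx (fun x => q2 (Sum.inl x)) l.toLeft ν₁.1)
        + (∑' ν₂ : {ν₂ : Finset P₂ // CoversF l.toRight ν₂},
          (κ₂ l.toRight ν₂.1 : ℂ) ^ 2 * bx (fun x => q2 (Sum.inr x)) l.toRight ν₂.1) := by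
  haveI := finite_up hLF₁ l.toLeft
  haveI := finite_up hLF₂ l.toRight
  haveI f1 : Fintype {ν₁ : Finset P₁ // CoversF l.toLeft ν₁} := Fintype.ofFinite _
  haveI f2 : Fintype {ν₂ : Finset P₂ // CoversF l.toRight ν₂} := Fintype.ofFinite _
  haveI f0 : Fintype {ν : Finset (P₁ ⊕ P₂) // CoversF l ν} :=
    Fintype.ofEquiv _ (upEquiv l hl).symm
  rw [tsum_fintype, tsum_fintype, tsum_fintype]
  have key : ∀ y : {ν₁ : Finset P₁ // CoversF l.toLeft ν₁} ⊕
      {ν₂ : Finset P₂ // CoversF l.toRight ν₂},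
      Sum.elim
        (fun ν₁ => (κ₁ l.toLeft ν₁.1 : ℂ) ^ 2 * bx (fun x => q2 (Sum.inl x)) l.toLeft ν₁.1)
        (fun ν₂ => (κ₂ l.toRight ν₂.1 : ℂ) ^ 2 * bx (fun x => q2 (Sum.inr x)) l.toRight ν₂.1) y
      = (sumKappa κ₁ κ₂ l ((upEquiv l hl).symm y).1 : ℂ) ^ 2
          * bx q2 l ((upEquiv l hl).symm y).1 := by
    rintro (ν₁ | ν₂)
    · have hval : ((upEquiv l hl).symm (Sum.inl ν₁)).1 = ν₁.1.disjSum l.toRight := rfl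
      have hne : ¬ l.toLeft = ν₁.1 := by
        intro he
        have hc := ν₁.2.2.2.2
        rw [← he] at hc; omega
      rw [hval, Sum.elim_inl, bx_split]
      simp only [sumKappa, Finset.toLeft_disjSum, Finset.toRight_disjSum, if_neg hne]
      simp [bx]
    · have hval : ((upEquiv l hl).symm (Sum.inr ν₂)).1 = l.toLeft.disjSum ν₂.1 := rfl
      rw [hval, Sum.elim_inr, bx_split]
      simp only [sumKappa, Finset.toLeft_disjSum, Finset.toRight_disjSum, if_pos rfl]
      simp [bx]
  rw [← Fintype.sum_equiv (upEquiv l hl).symm _ _ key, Fintype.sum_sum_type]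
  simp only [Sum.elim_inl, Sum.elim_inr]

lemma down_split (κ₁ : Finset P₁ → Finset P₁ → ℝ) (κ₂ : Finset P₂ → Finset P₂ → ℝ)
    (q2 : P₁ ⊕ P₂ → ℂ) (l : Finset (P₁ ⊕ P₂)) (hl : IsIdealF l) :
    (∑' μ : {μ : Finset (P₁ ⊕ P₂) // CoversF μ l},
        (sumKappa κ₁ κ₂ μ.1 l : ℂ) ^ 2 * bx q2 μ.1 l)
      = (∑' μ₁ : {μ₁ : Finset P₁ // CoversF μ₁ l.toLeft},
          (κ₁ μ₁.1 l.toLeft : ℂ) ^ 2 * bx (fun x => q2 (Sum.inl x)) μ₁.1 l.toLeft)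
        + (∑' μ₂ : {μ₂ : Finset P₂ // CoversF μ₂ l.toRight},
          (κ₂ μ₂.1 l.toRight : ℂ) ^ 2 * bx (fun x => q2 (Sum.inr x)) μ₂.1 l.toRight) := by
  haveI := finite_down (Q := P₁) l.toLeft
  haveI := finite_down (Q := P₂) l.toRight
  haveI f1 : Fintype {μ₁ : Finset P₁ // CoversF μ₁ l.toLeft} := Fintype.ofFinite _
  haveI f2 : Fintype {μ₂ : Finset P₂ // CoversF μ₂ l.toRight} := Fintype.ofFinite _
  haveI f0 : Fintype {μ : Finset (P₁ ⊕ P₂) // CoversF μ l} :=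
    Fintype.ofEquiv _ (downEquiv l hl).symm
  rw [tsum_fintype, tsum_fintype, tsum_fintype]
  have key : ∀ y : {μ₁ : Finset P₁ // CoversF μ₁ l.toLeft} ⊕
      {μ₂ : Finset P₂ // CoversF μ₂ l.toRight},
      Sum.elim
        (fun μ₁ => (κ₁ μ₁.1 l.toLeft : ℂ) ^ 2 * bx (fun x => q2 (Sum.inl x)) μ₁.1 l.toLeft)
        (fun μ₂ => (κ₂ μ₂.1 l.toRight : ℂ) ^ 2 * bx (fun x => q2 (Sum.inr x)) μ₂.1 l.toRight) y
      = (sumKappa κ₁ κ₂ ((downEquiv l hl).symm y).1 l : ℂ) ^ 2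
          * bx q2 ((downEquiv l hl).symm y).1 l := by
    rintro (μ₁ | μ₂)
    · have hval : ((downEquiv l hl).symm (Sum.inl μ₁)).1 = μ₁.1.disjSum l.toRight := rfl
      have hne : ¬ μ₁.1 = l.toLeft := by
        intro he
        have hc := μ₁.2.2.2.2
        rw [he] at hc; omega
      rw [hval, Sum.elim_inl, bx_split]
      simp only [sumKappa, Finset.toLeft_disjSum, Finset.toRight_disjSum, if_neg hne]
      simp [bx]
    · have hval : ((downEquiv l hl).symm (Sum.inr μ₂)).1 = l.toLeft.disjSum μ₂.1 := rfl
      rw [hval, Sum.elim_inr, bx_split]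
      simp only [sumKappa, Finset.toLeft_disjSum, Finset.toRight_disjSum, if_pos rfl]
      simp [bx]
  rw [← Fintype.sum_equiv (downEquiv l hl).symm _ _ key, Fintype.sum_sum_type]
  simp only [Sum.elim_inl, Sum.elim_inr]

end SumPoset

/-- Kerov conditions on a disjoint union `P = P₁ ⊔ P₂` (so that
`J(P) ≅ J(P₁) × J(P₂)`) correspond exactly to pairs of Kerov conditions on the two
components, the parameters adding up: `t = t₁ + t₂`. -/
theorem statement3 {P₁ P₂ : Type*} [PartialOrder P₁] [PartialOrder P₂]
    (κ₁ : Finset P₁ → Finset P₁ → ℝ) (κ₂ : Finset P₂ → Finset P₂ → ℝ)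
    (hκ₁ : EdgePositive κ₁) (hκ₂ : EdgePositive κ₂)
    (hLF₁ : LevelsFinite P₁) (hLF₂ : LevelsFinite P₂)
    (q2 : P₁ ⊕ P₂ → ℂ) (t : ℂ) :
    KerovCond (sumKappa κ₁ κ₂) q2 t ↔
      ∃ t₁ t₂ : ℂ, t = t₁ + t₂ ∧
        KerovCond κ₁ (fun x => q2 (Sum.inl x)) t₁ ∧
        KerovCond κ₂ (fun x => q2 (Sum.inr x)) t₂ := by
  have hE₁ : IsIdealF (∅ : Finset P₁) := fun x hx => by simp at hx
  have hE₂ : IsIdealF (∅ : Finset P₂) := fun x hx => by simp at hx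
  set D₁ : Finset P₁ → ℂ := fun l₁ =>
    (∑' ν : {ν : Finset P₁ // CoversF l₁ ν},
      (κ₁ l₁ ν.1 : ℂ) ^ 2 * bx (fun x => q2 (Sum.inl x)) l₁ ν.1)
    - (∑' μ : {μ : Finset P₁ // CoversF μ l₁},
      (κ₁ μ.1 l₁ : ℂ) ^ 2 * bx (fun x => q2 (Sum.inl x)) μ.1 l₁)
    - 2 * (l₁.card : ℂ) with hD₁
  set D₂ : Finset P₂ → ℂ := fun l₂ =>
    (∑' ν : {ν : Finset P₂ // CoversF l₂ ν},
      (κ₂ l₂ ν.1 : ℂ) ^ 2 * bx (fun x => q2 (Sum.inr x)) l₂ ν.1)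
    - (∑' μ : {μ : Finset P₂ // CoversF μ l₂},
      (κ₂ μ.1 l₂ : ℂ) ^ 2 * bx (fun x => q2 (Sum.inr x)) μ.1 l₂)
    - 2 * (l₂.card : ℂ) with hD₂
  have hKC₁ : ∀ s : ℂ, KerovCond κ₁ (fun x => q2 (Sum.inl x)) s ↔
      ∀ l₁, IsIdealF l₁ → D₁ l₁ = s := by
    intro s
    constructor
    · intro h l₁ h₁
      have h' := h l₁ h₁
      simp only [hD₁]
      linear_combination h'
    · intro h l₁ h₁
      have h' := h l₁ h₁
      simp only [hD₁] at h'
      linear_combination h'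
  have hKC₂ : ∀ s : ℂ, KerovCond κ₂ (fun x => q2 (Sum.inr x)) s ↔
      ∀ l₂, IsIdealF l₂ → D₂ l₂ = s := by
    intro s
    constructor
    · intro h l₂ h₂
      have h' := h l₂ h₂
      simp only [hD₂]
      linear_combination h'
    · intro h l₂ h₂
      have h' := h l₂ h₂
      simp only [hD₂] at h'
      linear_combination h'
  have hsplit : ∀ l : Finset (P₁ ⊕ P₂), IsIdealF l →
      (∑' ν : {ν : Finset (P₁ ⊕ P₂) // CoversF l ν},
        (sumKappa κ₁ κ₂ l ν.1 : ℂ) ^ 2 * bx q2 l ν.1)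
      - (∑' μ : {μ : Finset (P₁ ⊕ P₂) // CoversF μ l},
        (sumKappa κ₁ κ₂ μ.1 l : ℂ) ^ 2 * bx q2 μ.1 l)
      = D₁ l.toLeft + D₂ l.toRight + 2 * (l.card : ℂ) := by
    intro l hl
    rw [up_split κ₁ κ₂ hLF₁ hLF₂ q2 l hl, down_split κ₁ κ₂ q2 l hl]
    have hc : (l.card : ℂ) = (l.toLeft.card : ℂ) + (l.toRight.card : ℂ) := by
      rw [← Finset.card_toLeft_add_card_toRight (u := l)]
      push_cast
      ring
    simp only [hD₁, hD₂]
    rw [hc]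
    ring
  have hKsum : ∀ s : ℂ, KerovCond (sumKappa κ₁ κ₂) q2 s ↔
      ∀ l, IsIdealF l → D₁ l.toLeft + D₂ l.toRight = s := by
    intro s
    constructor
    · intro h l hl
      have h' := h l hl
      have h2 := hsplit l hl
      linear_combination h' - h2
    · intro h l hl
      have h' := h l hl
      have h2 := hsplit l hl
      linear_combination h2 + h'
  have hIds : ∀ (l₁ : Finset P₁) (l₂ : Finset P₂), IsIdealF l₁ → IsIdealF l₂ →
      IsIdealF (l₁.disjSum l₂) := by
    intro l₁ l₂ h₁ h₂
    refine isIdealF_sum_iff.mpr ⟨?_, ?_⟩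
    · rw [Finset.toLeft_disjSum]; exact h₁
    · rw [Finset.toRight_disjSum]; exact h₂
  constructor
  · intro hK
    have hmain := (hKsum t).mp hK
    have hp : ∀ (l₁ : Finset P₁) (l₂ : Finset P₂), IsIdealF l₁ → IsIdealF l₂ →
        D₁ l₁ + D₂ l₂ = t := by
      intro l₁ l₂ h₁ h₂
      have := hmain (l₁.disjSum l₂) (hIds _ _ h₁ h₂)
      simpa using this
    refine ⟨t - D₂ ∅, D₂ ∅, by ring, ?_, ?_⟩
    · rw [hKC₁]
      intro l₁ h₁
      linear_combination hp l₁ ∅ h₁ hE₂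
    · rw [hKC₂]
      intro l₂ h₂
      linear_combination hp ∅ l₂ hE₁ h₂ - hp ∅ ∅ hE₁ hE₂
  · rintro ⟨t₁, t₂, rfl, h1, h2⟩
    rw [hKsum]
    intro l hl
    have g1 := (hKC₁ t₁).mp h1 l.toLeft (isIdealF_sum_iff.mp hl).1
    have g2 := (hKC₂ t₂).mp h2 l.toRight (isIdealF_sum_iff.mp hl).2
    linear_combination g1 + g2

end IdealGraph
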